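/- Let C →* D be an execution of a broadcast protocol over an arbitrary topology Γ of length n starting in the initial configuration and ending with vertex v in state q_f. Let (T,λ) be the unfolding tree of Γ at v to depth n. Then if C' is h-correct for a configuration C₁ over Γ (i.e., every vertex of T at depth ≤ h has the state of its λ-image in C₁) and C₁ → C₂ over Γ, there exists C'₂ over T with C' →* C'₂ such that C'₂ is (h−1)-correct for C₂. Consequently the root of T can reach q_f. -/

import Mathlib

namespace BN

/-- Actions of a broadcast protocol: broadcast `!!m`, reception `?m`, internal `τ`. -/
inductive Act (M : Type) : Type where
  | brd : M → Act M
  | rcv : M → Act M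
  | tau : Act M

/-- A broadcast protocol: an initial state and a set of transitions. -/
structure Protocol (Q M : Type) : Type where
  qin : Q
  delta : Set (Q × Act M × Q)

variable {Q M V : Type}

/-- `q` has an outgoing reception of `m`. -/
def canRecv (P : Protocol Q M) (q : Q) (m : M) : Prop :=
  ∃ q', (q, Act.rcv m, q') ∈ P.delta

/-- One step of the broadcast network semantics over topology `G`,
performed by vertex `v` taking transition `t`. -/
def Step (G : SimpleGraph V) (P : Protocol Q M) (v : V)
    (t : Q × Act M × Q) (L L' : V → Q) : Prop :=
  t ∈ P.delta ∧ L v = t.1 ∧ L' v = t.2.2 ∧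
  (match t.2.1 with
   | Act.tau => ∀ u, u ≠ v → L' u = L u
   | Act.brd m =>
       (∀ u, G.Adj v u →
          ((L u, Act.rcv m, L' u) ∈ P.delta ∨ (¬ canRecv P (L u) m ∧ L' u = L u))) ∧
       (∀ u, u ≠ v → ¬ G.Adj v u → L' u = L u)
   | Act.rcv _ => False)

def StepAny (G : SimpleGraph V) (P : Protocol Q M) (L L' : V → Q) : Prop :=
  ∃ v t, Step G P v t L L'

def Reach (G : SimpleGraph V) (P : Protocol Q M) : (V → Q) → (V → Q) → Prop :=
  Relation.ReflTransGen (StepAny G P)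

def initConf (P : Protocol Q M) : V → Q := fun _ => P.qin

/-- `qf` is coverable over the class of all (finite) graph topologies. -/
def Coverable (P : Protocol Q M) (qf : Q) : Prop :=
  ∃ (V' : Type) (_ : Fintype V') (G : SimpleGraph V') (L : V' → Q),
    Reach G P (initConf P) L ∧ ∃ v, L v = qf

/-- A tree topology: a prefix-closed finite set of words over ℕ containing ε. -/
structure TreeTopo : Type where
  verts : Finset (List ℕ)
  nil_mem : ([] : List ℕ) ∈ verts
  prefixClosed : ∀ w ∈ verts, ∀ w' : List ℕ, w' <+: w → w' ∈ verts

abbrev TreeTopo.Vert (T : TreeTopo) : Type := {w : List ℕ // w ∈ T.verts}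

def TreeTopo.root (T : TreeTopo) : T.Vert := ⟨[], T.nil_mem⟩

/-- The graph of a tree topology: each word `w ++ [x]` is adjacent to its parent `w`. -/
def TreeTopo.graph (T : TreeTopo) : SimpleGraph T.Vert where
  Adj u v := (∃ x : ℕ, (v : List ℕ) = (u : List ℕ) ++ [x]) ∨
             (∃ x : ℕ, (u : List ℕ) = (v : List ℕ) ++ [x])
  symm := by constructor; intro u v h; exact h.symm
  loopless := by
    constructor; intro u h
    rcases h with ⟨x, hx⟩ | ⟨x, hx⟩ <;> simpa using congrArg List.length hx

def CoverableWith (T : TreeTopo) (P : Protocol Q M) (qf : Q) : Prop :=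
  ∃ L : T.Vert → Q, Reach T.graph P (initConf P) L ∧ ∃ u, L u = qf

def CoverableTreeRoot (P : Protocol Q M) (qf : Q) : Prop :=
  ∃ (T : TreeTopo) (L : T.Vert → Q),
    Reach T.graph P (initConf P) L ∧ L T.root = qf

/-- `(T, lam)` is the unfolding of graph `G` at vertex `v` to depth `n`. -/
structure IsUnfolding {V : Type} (G : SimpleGraph V) (v : V) (n : ℕ)
    (T : TreeTopo) (lam : T.Vert → V) : Prop where
  root_lbl : lam T.root = v
  depth_le : ∀ w ∈ T.verts, w.length ≤ n
  root_children :
    Set.BijOn lam {u : T.Vert | ∃ x : ℕ, (u : List ℕ) = [x]} (G.neighborSet v)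
  children : ∀ (u : T.Vert) (w : List ℕ) (hw : w ∈ T.verts) (x : ℕ),
      (u : List ℕ) = w ++ [x] → (u : List ℕ).length < n →
      Set.BijOn lam {u' : T.Vert | ∃ y : ℕ, (u' : List ℕ) = (u : List ℕ) ++ [y]}
        (G.neighborSet (lam u) \ {lam ⟨w, hw⟩})
  no_deep : ∀ u : T.Vert, n ≤ (u : List ℕ).length →
      ∀ x : ℕ, (u : List ℕ) ++ [x] ∉ T.verts

/-- Phase tags annotating states: `zero` (phase 0), broadcast phase `j`, reception phase `j`. -/
inductive PTag : Type where
  | zero : PTag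
  | bph : ℕ → PTag
  | rph : ℕ → PTag
deriving DecidableEq

def bOf : ℕ → PTag
  | 0 => .zero
  | j+1 => .bph (j+1)

def rOf : ℕ → PTag
  | 0 => .zero
  | j+1 => .rph (j+1)

/-- `φ` witnesses that `P` is `k`-phase-bounded. -/
def IsPhaseAssignment (k : ℕ) (P : Protocol Q M) (φ : Q → PTag) : Prop :=
  φ P.qin = .zero ∧
  (∀ q : Q, φ q = .zero ∨ ∃ j, 1 ≤ j ∧ j ≤ k ∧ (φ q = .bph j ∨ φ q = .rph j)) ∧
  ∀ t ∈ P.delta,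
    (match t.2.1 with
     | Act.tau => φ t.1 = φ t.2.2
     | Act.brd _ =>
         (∃ j, 1 ≤ j ∧ j ≤ k ∧ φ t.1 = .bph j ∧ φ t.2.2 = .bph j) ∨
         (∃ i, i < k ∧ φ t.1 = rOf i ∧ φ t.2.2 = .bph (i+1))
     | Act.rcv _ =>
         (∃ j, 1 ≤ j ∧ j ≤ k ∧ φ t.1 = .rph j ∧ φ t.2.2 = .rph j) ∨
         (∃ i, i < k ∧ φ t.1 = bOf i ∧ φ t.2.2 = .rph (i+1)) ∨
         (1 ≤ k ∧ φ t.1 = .bph k ∧ φ t.2.2 = .rph k))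

def IsPhaseBounded (k : ℕ) (P : Protocol Q M) : Prop :=
  ∃ φ : Q → PTag, IsPhaseAssignment k P φ

/-- The `k`-unfolding `Pₖ` of a protocol `P`. -/
def unfoldP (P : Protocol Q M) (k : ℕ) : Protocol (Q × PTag) M where
  qin := (P.qin, .zero)
  delta :=
    {t | ∃ q p, (q, Act.tau, p) ∈ P.delta ∧ t = ((q, .zero), Act.tau, (p, .zero))} ∪
    {t | ∃ q p α j, 1 ≤ j ∧ j ≤ k ∧ (q, α, p) ∈ P.delta ∧
        (α = Act.tau ∨ ∃ m, α = Act.rcv m) ∧ t = ((q, .rph j), α, (p, .rph j))} ∪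
    {t | ∃ q p α j, 1 ≤ j ∧ j ≤ k ∧ (q, α, p) ∈ P.delta ∧
        (α = Act.tau ∨ ∃ m, α = Act.brd m) ∧ t = ((q, .bph j), α, (p, .bph j))} ∪
    {t | ∃ q p m j, j < k ∧ (q, Act.brd m, p) ∈ P.delta ∧
        t = ((q, rOf j), Act.brd m, (p, .bph (j+1)))} ∪
    {t | ∃ q p m j, j < k ∧ (q, Act.rcv m, p) ∈ P.delta ∧
        t = ((q, bOf j), Act.rcv m, (p, .rph (j+1)))} ∪
    {t | ∃ q p m, 1 ≤ k ∧ (q, Act.rcv m, p) ∈ P.delta ∧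
        t = ((q, .bph k), Act.rcv m, (p, .rph k))}

/-- Star topology: root `none` adjacent to every leaf `some i`, no other edges. -/
def starGraph (ι : Type) : SimpleGraph (Option ι) where
  Adj u v := (u = none ∧ v ≠ none) ∨ (v = none ∧ u ≠ none)
  symm := by constructor; intro u v h; tauto
  loopless := by constructor; intro u h; tauto

/-- For a 1-phase-bounded protocol with witness `φ`, `Q^b = Q₀ ∪ Q₁^b`. -/
def Qb (φ : Q → PTag) : Set Q := {q | φ q = .zero ∨ φ q = .bph 1}

/-- The set component of the broadcast-print of a star configuration. -/
def bprintSet {ι : Type} (φ : Q → PTag) (L : Option ι → Q) : Set Q :=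
  {q | q ∈ Qb φ ∧ ∃ i, L (some i) = q}

/-- The abstract transition relation `⇒` on broadcast-prints. -/
def PrintStep (P : Protocol Q M) (φ : Q → PTag) :
    (Q × Set Q) → (Q × Set Q) → Prop := fun pr pr' =>
  ∃ (ι : Type) (_ : Fintype ι) (L L' : Option ι → Q),
    StepAny (starGraph ι) P L L' ∧ L none ∈ Qb φ ∧ L' none ∈ Qb φ ∧
    pr = (L none, bprintSet φ L) ∧ pr' = (L' none, bprintSet φ L')

/-- Line topology on `Fin ℓ`: consecutive vertices are adjacent. -/
def lineGraph (ℓ : ℕ) : SimpleGraph (Fin ℓ) where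
  Adj i j := (i : ℕ) + 1 = (j : ℕ) ∨ (j : ℕ) + 1 = (i : ℕ)
  symm := by constructor; intro i j h; tauto
  loopless := by constructor; intro i h; rcases h with h | h <;> omega

/-- `t` is a broadcast transition. -/
def IsBrdT (t : Q × Act M × Q) : Prop := ∃ m, t.2.1 = Act.brd m

/-- In the execution described by `vs, ts` of length `n`, `i` is the first index at
which vertex `u` performs a broadcast. -/
def IsFirstBrd {V' : Type} (vs : ℕ → V') (ts : ℕ → Q × Act M × Q) (n : ℕ)
    (u : V') (i : ℕ) : Prop :=
  i < n ∧ vs i = u ∧ IsBrdT (ts i) ∧ ∀ j < i, vs j = u → ¬ IsBrdT (ts j)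

/-- Every transition of `u` occurs no later than every broadcast of `w`
(i.e. lastBroadcast(u) ≤ firstBroadcast(w)). -/
def BrdOrder {V' : Type} (n : ℕ) (vs : ℕ → V') (ts : ℕ → Q × Act M × Q)
    (u w : V') : Prop :=
  ∀ j j', j < n → j' < n → vs j = u → vs j' = w → IsBrdT (ts j') → j ≤ j'

/-- One application of the pair-coverability operator. -/
def pairStep (P : Protocol Q M) (S : Set (Q × Q)) : Set (Q × Q) :=
  S ∪
  {p | ∃ p₁, (p₁, p.2) ∈ S ∧ (p₁, Act.tau, p.1) ∈ P.delta} ∪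
  {p | ∃ p₂, (p.1, p₂) ∈ S ∧ (p₂, Act.tau, p.2) ∈ P.delta} ∪
  {p | ∃ p₁ p₂ m, (p₁, p₂) ∈ S ∧ (p₂, Act.brd m, p.2) ∈ P.delta ∧
      (p₁, Act.rcv m, p.1) ∈ P.delta} ∪
  {p | ∃ p₂ m, (p.1, p₂) ∈ S ∧ (p₂, Act.brd m, p.2) ∈ P.delta ∧ ¬ canRecv P p.1 m} ∪
  {p | p.1 = P.qin ∧ ∃ q', (p.2, q') ∈ S}

/-- The iteration `S₀ ⊆ S₁ ⊆ …` of the pair-coverability operator. -/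
def Siter (P : Protocol Q M) : ℕ → Set (Q × Q)
  | 0 => {(P.qin, P.qin)}
  | i+1 => pairStep P (Siter P i)


open Classical in
/-- Configuration after a set `s` of "actors" have fired: actors and their
neighbours get their `f`-value, everyone else keeps `C0`. -/
noncomputable def appl {Q V' : Type} (G' : SimpleGraph V') (f C0 : V' → Q) (s : Set V') :
    V' → Q :=
  fun x => if x ∈ s ∨ ∃ b ∈ s, G'.Adj b x then f x else C0 x

lemma multi_step {Q M V' : Type} (G' : SimpleGraph V') (P : Protocol Q M)
    (q1 : Q) (α : Act M) (q2 : Q) (ht : (q1, α, q2) ∈ P.delta) (C' f : V' → Q) (B : Set V')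
    (h1 : ∀ b ∈ B, C' b = q1 ∧ f b = q2)
    (h2 : ∀ a ∈ B, ∀ b ∈ B, ¬ G'.Adj a b)
    (h3 : match α with
      | Act.tau => ∀ x, x ∉ B → f x = C' x
      | Act.brd m =>
          (∀ x, x ∉ B → (∃ b ∈ B, G'.Adj b x) →
            ((C' x, Act.rcv m, f x) ∈ P.delta ∨ (¬ canRecv P (C' x) m ∧ f x = C' x))) ∧
          (∀ (x a b : V'), a ∈ B → b ∈ B → G'.Adj a x → G'.Adj b x → a = b)
      | Act.rcv _ => False) :
    ∀ l : List V', l.Nodup → (∀ x ∈ l, x ∈ B) →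
      Reach G' P C' (appl G' f C' {x | x ∈ l}) := by
  classical
  intro l
  induction l with
  | nil =>
      intro _ _
      have he : appl G' f C' {x : V' | x ∈ ([] : List V')} = C' := by
        funext x; simp [appl]
      rw [he]
      exact Relation.ReflTransGen.refl
  | cons b rest ih =>
      intro hnd hmem
      have hndr : rest.Nodup := (List.nodup_cons.mp hnd).2
      have hbnr : b ∉ rest := (List.nodup_cons.mp hnd).1
      have hmemr : ∀ x ∈ rest, x ∈ B := fun x hx => hmem x (List.mem_cons_of_mem _ hx)
      have hbB : b ∈ B := hmem b (List.mem_cons_self (a := b) (l := rest))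
      have hsub : ∀ x : V', x ∈ ({x | x ∈ rest} : Set V') → x ∈ B := fun x hx => hmemr x hx
      have hcond : ∀ u, u ≠ b → ¬ G'.Adj b u →
          ((u ∈ ({x | x ∈ b :: rest} : Set V') ∨ ∃ c ∈ ({x | x ∈ b :: rest} : Set V'), G'.Adj c u)
            ↔ (u ∈ ({x | x ∈ rest} : Set V') ∨ ∃ c ∈ ({x | x ∈ rest} : Set V'), G'.Adj c u)) := by
        intro u hub hadj
        constructor
        · rintro (hu | ⟨c, hc, hcadj⟩)
          · rcases List.mem_cons.mp hu with h | h
            · exact absurd h hub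
            · exact Or.inl h
          · rcases List.mem_cons.mp hc with h | h
            · subst h; exact absurd hcadj hadj
            · exact Or.inr ⟨c, h, hcadj⟩
        · rintro (hu | ⟨c, hc, hcadj⟩)
          · exact Or.inl (List.mem_cons_of_mem _ hu)
          · exact Or.inr ⟨c, List.mem_cons_of_mem _ hc, hcadj⟩
      have happl_eq : ∀ u, u ≠ b → ¬ G'.Adj b u →
          appl G' f C' {x | x ∈ b :: rest} u = appl G' f C' {x | x ∈ rest} u := by
        intro u hub hadj
        simp only [appl]
        by_cases hcase : (u ∈ ({x | x ∈ rest} : Set V') ∨ ∃ c ∈ ({x | x ∈ rest} : Set V'), G'.Adj c u)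
        · rw [if_pos ((hcond u hub hadj).mpr hcase), if_pos hcase]
        · rw [if_neg (fun hx => hcase ((hcond u hub hadj).mp hx)), if_neg hcase]
      have hpre : appl G' f C' {x | x ∈ rest} b = C' b := by
        simp only [appl]
        rw [if_neg]
        rintro (hb | ⟨c, hc, hcadj⟩)
        · exact hbnr hb
        · exact h2 c (hsub c hc) b hbB hcadj
      have hpost : appl G' f C' {x | x ∈ b :: rest} b = f b := by
        have hmem' : b ∈ ({x | x ∈ b :: rest} : Set V') := List.mem_cons_self (a := b) (l := rest)
        simp only [appl]
        rw [if_pos (Or.inl hmem')]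
      refine Relation.ReflTransGen.tail (ih hndr hmemr) ⟨b, (q1, α, q2), ?_⟩
      cases α with
      | rcv m => exact h3.elim
      | tau =>
          refine ⟨ht, by rw [hpre]; exact (h1 b hbB).1, by rw [hpost]; exact (h1 b hbB).2, ?_⟩
          intro u hub
          by_cases hadj : G'.Adj b u
          · have huB : u ∉ B := fun hu => h2 b hbB u hu hadj
            have hfu : f u = C' u := h3 u huB
            simp only [appl]
            split_ifs <;> simp [hfu]
          · exact happl_eq u hub hadj
      | brd m =>
          refine ⟨ht, by rw [hpre]; exact (h1 b hbB).1, by rw [hpost]; exact (h1 b hbB).2, ?_, ?_⟩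
          · intro u hadj
            have huB : u ∉ B := fun hu => h2 b hbB u hu hadj
            have h1' : appl G' f C' {x | x ∈ rest} u = C' u := by
              simp only [appl]
              rw [if_neg]
              rintro (hu | ⟨c, hc, hcadj⟩)
              · exact huB (hsub u hu)
              · exact hbnr ((h3.2 u c b (hsub c hc) hbB hcadj hadj) ▸ hc)
            have h2' : appl G' f C' {x | x ∈ b :: rest} u = f u := by
              have hmem' : b ∈ ({x | x ∈ b :: rest} : Set V') := List.mem_cons_self (a := b) (l := rest)
              simp only [appl]
              rw [if_pos (Or.inr ⟨b, hmem', hadj⟩)]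
            rw [h1', h2']
            exact h3.1 u huB ⟨b, hbB, hadj⟩
          · intro u hub hadj
            exact happl_eq u hub hadj

lemma unf_len_lt {V : Type} {G : SimpleGraph V} {v : V} {n : ℕ} {T : TreeTopo}
    {lam : T.Vert → V} (hunf : IsUnfolding G v n T lam)
    (x y : T.Vert) (a : ℕ) (hxy : (y : List ℕ) = (x : List ℕ) ++ [a]) :
    (x : List ℕ).length < n := by
  by_contra hle
  exact hunf.no_deep x (le_of_not_gt hle) a (by rw [← hxy]; exact y.2)

lemma unf_adj {V : Type} {G : SimpleGraph V} {v : V} {n : ℕ} {T : TreeTopo}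
    {lam : T.Vert → V} (hunf : IsUnfolding G v n T lam)
    (x y : T.Vert) (a : ℕ) (hxy : (y : List ℕ) = (x : List ℕ) ++ [a]) :
    G.Adj (lam x) (lam y) := by
  have hlt := unf_len_lt hunf x y a hxy
  rcases List.eq_nil_or_concat (x : List ℕ) with hx | ⟨w', z, hx⟩
  <;> [skip; rw [List.concat_eq_append] at hx]
  · have hxr : x = T.root := Subtype.ext hx
    have hmem : y ∈ {u : T.Vert | ∃ c : ℕ, (u : List ℕ) = [c]} := ⟨a, by rw [hxy, hx]; rfl⟩
    have h := hunf.root_children.mapsTo hmem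
    rw [hxr, hunf.root_lbl]
    exact h
  · have hw' : w' ∈ T.verts := T.prefixClosed _ x.2 w' ⟨[z], hx.symm⟩
    obtain ⟨h1, _⟩ := (hunf.children x w' hw' z hx hlt).mapsTo ⟨a, hxy⟩
    exact h1

lemma unf_uniq {V : Type} {G : SimpleGraph V} {v : V} {n : ℕ} {T : TreeTopo}
    {lam : T.Vert → V} (hunf : IsUnfolding G v n T lam)
    (x a b : T.Vert) (hl : lam a = lam b)
    (hax : T.graph.Adj a x) (hbx : T.graph.Adj b x) : a = b := by
  have hax' : (∃ c : ℕ, (x : List ℕ) = (a : List ℕ) ++ [c]) ∨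
      (∃ c : ℕ, (a : List ℕ) = (x : List ℕ) ++ [c]) := hax
  have hbx' : (∃ c : ℕ, (x : List ℕ) = (b : List ℕ) ++ [c]) ∨
      (∃ c : ℕ, (b : List ℕ) = (x : List ℕ) ++ [c]) := hbx
  rcases hax' with ⟨c, hc⟩ | ⟨c, hc⟩ <;> rcases hbx' with ⟨d, hd⟩ | ⟨d, hd⟩
  · refine Subtype.ext ?_
    have h := congrArg List.dropLast (hc.symm.trans hd)
    simpa using h
  · have hlt := unf_len_lt hunf x b d hd
    obtain ⟨_, h2⟩ := (hunf.children x (a : List ℕ) a.2 c hc hlt).mapsTo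
      (show b ∈ {u' : T.Vert | ∃ y : ℕ, (u' : List ℕ) = (x : List ℕ) ++ [y]} from ⟨d, hd⟩)
    exact absurd hl.symm h2
  · have hlt := unf_len_lt hunf x a c hc
    obtain ⟨_, h2⟩ := (hunf.children x (b : List ℕ) b.2 d hd hlt).mapsTo
      (show a ∈ {u' : T.Vert | ∃ y : ℕ, (u' : List ℕ) = (x : List ℕ) ++ [y]} from ⟨c, hc⟩)
    exact absurd hl h2
  · have hlt := unf_len_lt hunf x a c hc
    rcases List.eq_nil_or_concat (x : List ℕ) with hx | ⟨w', z, hx⟩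
  <;> [skip; rw [List.concat_eq_append] at hx]
    · have hma : a ∈ {u : T.Vert | ∃ y : ℕ, (u : List ℕ) = [y]} := ⟨c, by rw [hc, hx]; rfl⟩
      have hmb : b ∈ {u : T.Vert | ∃ y : ℕ, (u : List ℕ) = [y]} := ⟨d, by rw [hd, hx]; rfl⟩
      exact hunf.root_children.injOn hma hmb hl
    · have hw' : w' ∈ T.verts := T.prefixClosed _ x.2 w' ⟨[z], hx.symm⟩
      exact (hunf.children x w' hw' z hx hlt).injOn ⟨c, hc⟩ ⟨d, hd⟩ hl

lemma unf_exists {V : Type} {G : SimpleGraph V} {v : V} {n : ℕ} {T : TreeTopo}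
    {lam : T.Vert → V} (hunf : IsUnfolding G v n T lam)
    (x : T.Vert) (w : V) (hlt : (x : List ℕ).length < n) (hadj : G.Adj (lam x) w) :
    ∃ b : T.Vert, lam b = w ∧ (b : List ℕ).length ≤ (x : List ℕ).length + 1 ∧
      T.graph.Adj b x := by
  rcases List.eq_nil_or_concat (x : List ℕ) with hx | ⟨w', z, hx⟩
  <;> [skip; rw [List.concat_eq_append] at hx]
  · have hxr : x = T.root := Subtype.ext hx
    have hw : w ∈ G.neighborSet v := by
      rw [← hunf.root_lbl, ← hxr]; exact hadj
    obtain ⟨b, hbmem, hbl⟩ := hunf.root_children.surjOn hw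
    obtain ⟨y, hy⟩ := hbmem
    refine ⟨b, hbl, ?_, Or.inr ⟨y, by rw [hy, hx]; rfl⟩⟩
    rw [hy]
    simp
  · have hw' : w' ∈ T.verts := T.prefixClosed _ x.2 w' ⟨[z], hx.symm⟩
    by_cases hp : lam ⟨w', hw'⟩ = w
    · refine ⟨⟨w', hw'⟩, hp, ?_, Or.inl ⟨z, hx⟩⟩
      show w'.length ≤ (x : List ℕ).length + 1
      have hlen := congrArg List.length hx
      simp at hlen
      omega
    · have hw : w ∈ G.neighborSet (lam x) \ {lam ⟨w', hw'⟩} :=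
        ⟨hadj, fun h => hp (Eq.symm h)⟩
      obtain ⟨b, hbmem, hbl⟩ := (hunf.children x w' hw' z hx hlt).surjOn hw
      obtain ⟨y, hy⟩ := hbmem
      refine ⟨b, hbl, ?_, Or.inr ⟨y, hy⟩⟩
      rw [hy]
      simp


lemma key_lemma {Q M V : Type} {G : SimpleGraph V} (P : Protocol Q M) {v : V} {n : ℕ}
    {T : TreeTopo} {lam : T.Vert → V} (hunf : IsUnfolding G v n T lam)
    (h : ℕ) (C₁ C₂ : V → Q) (C' : T.Vert → Q)
    (hpos : 0 < h) (hle : h ≤ n) (hst : StepAny G P C₁ C₂)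
    (hcorr : ∀ u : T.Vert, (u : List ℕ).length ≤ h → C' u = C₁ (lam u)) :
    ∃ C'₂ : T.Vert → Q, Reach T.graph P C' C'₂ ∧
      ∀ u : T.Vert, (u : List ℕ).length ≤ h - 1 → C'₂ u = C₂ (lam u) := by
  classical
  obtain ⟨w, t, hst⟩ := hst
  obtain ⟨q1, α, q2⟩ := t
  obtain ⟨ht, hq1, hq2, hmatch⟩ := hst
  -- the set of actors in the tree
  set B : Set T.Vert := {u : T.Vert | lam u = w ∧ (u : List ℕ).length ≤ h} with hBdef
  have hmemB : ∀ u : T.Vert, u ∈ B ↔ (lam u = w ∧ (u : List ℕ).length ≤ h) := fun u => Iff.rfl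
  have hBfin : B.Finite := Set.toFinite B
  have hnd : hBfin.toFinset.toList.Nodup := Finset.nodup_toList _
  have hlmem : ∀ x : T.Vert, x ∈ hBfin.toFinset.toList ↔ x ∈ B := by
    intro x
    rw [Finset.mem_toList, Set.Finite.mem_toFinset]
  have hsetl : {x : T.Vert | x ∈ hBfin.toFinset.toList} = B := Set.ext hlmem
  -- pairwise non-adjacency of actors
  have h2 : ∀ a ∈ B, ∀ b ∈ B, ¬ T.graph.Adj a b := by
    intro a ha b hb hadj
    have hadj' : (∃ c : ℕ, (b : List ℕ) = (a : List ℕ) ++ [c]) ∨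
        (∃ c : ℕ, (a : List ℕ) = (b : List ℕ) ++ [c]) := hadj
    rcases hadj' with ⟨c, hc⟩ | ⟨c, hc⟩
    · have := unf_adj hunf a b c hc
      rw [((hmemB a).mp ha).1, ((hmemB b).mp hb).1] at this
      exact G.loopless.irrefl w this
    · have := unf_adj hunf b a c hc
      rw [((hmemB a).mp ha).1, ((hmemB b).mp hb).1] at this
      exact G.loopless.irrefl w this
  -- a tree-neighbour of an actor is mapped to a G-neighbour of w
  have hnbr : ∀ (x b : T.Vert), b ∈ B → T.graph.Adj b x → G.Adj w (lam x) := by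
    intro x b hb hadj
    have hadj' : (∃ c : ℕ, (x : List ℕ) = (b : List ℕ) ++ [c]) ∨
        (∃ c : ℕ, (b : List ℕ) = (x : List ℕ) ++ [c]) := hadj
    rcases hadj' with ⟨c, hc⟩ | ⟨c, hc⟩
    · have := unf_adj hunf b x c hc
      rwa [((hmemB b).mp hb).1] at this
    · have := (unf_adj hunf x b c hc).symm
      rwa [((hmemB b).mp hb).1] at this
  have h1 : ∀ b ∈ B, C' b = q1 := by
    intro b hb
    rw [hcorr b ((hmemB b).mp hb).2, ((hmemB b).mp hb).1]
    exact hq1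
  cases α with
  | rcv m => exact hmatch.elim
  | tau =>
      set f : T.Vert → Q :=
        fun x => if lam x = w ∧ (x : List ℕ).length ≤ h then q2 else C' x with hfdef
      have hfB : ∀ b ∈ B, f b = q2 := by
        intro b hb
        simp only [hfdef]
        rw [if_pos ((hmemB b).mp hb)]
      have hfnB : ∀ x, x ∉ B → f x = C' x := by
        intro x hx
        have hx' : ¬ (lam x = w ∧ (x : List ℕ).length ≤ h) := fun hc => hx ((hmemB x).mpr hc)
        simp only [hfdef]
        rw [if_neg hx']
      have hreach := multi_step T.graph P q1 Act.tau q2 ht C' f B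
        (fun b hb => ⟨h1 b hb, hfB b hb⟩) h2 hfnB hBfin.toFinset.toList hnd
        (fun x hx => (hlmem x).mp hx)
      rw [hsetl] at hreach
      refine ⟨_, hreach, ?_⟩
      intro u hu
      have hu' : (u : List ℕ).length ≤ h := le_trans hu (Nat.sub_le h 1)
      by_cases hwu : lam u = w
      · have huB : u ∈ B := (hmemB u).mpr ⟨hwu, hu'⟩
        have ha : appl T.graph f C' B u = f u := by
          simp only [appl]
          rw [if_pos (Or.inl huB)]
        rw [ha, hfB u huB, hwu, hq2]
      · have hfu : f u = C' u := hfnB u (fun hc => hwu ((hmemB u).mp hc).1)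
        have ha : appl T.graph f C' B u = C' u := by
          simp only [appl]
          split_ifs <;> simp [hfu]
        rw [ha, hcorr u hu']
        exact (hmatch (lam u) hwu).symm
  | brd m =>
      obtain ⟨hnbrs, hfar⟩ := hmatch
      set f : T.Vert → Q := fun x =>
        if lam x = w ∧ (x : List ℕ).length ≤ h then q2
        else if (x : List ℕ).length ≤ h then C₂ (lam x)
        else if hc : canRecv P (C' x) m then hc.choose else C' x with hfdef
      have hfB : ∀ b ∈ B, f b = q2 := by
        intro b hb
        simp only [hfdef]
        rw [if_pos ((hmemB b).mp hb)]
      have hfmid : ∀ x : T.Vert, x ∉ B → (x : List ℕ).length ≤ h → f x = C₂ (lam x) := by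
        intro x hx hxh
        have hx' : ¬ (lam x = w ∧ (x : List ℕ).length ≤ h) := fun hc => hx ((hmemB x).mpr hc)
        simp only [hfdef]
        rw [if_neg hx', if_pos hxh]
      have h3 : (∀ x, x ∉ B → (∃ b ∈ B, T.graph.Adj b x) →
            ((C' x, Act.rcv m, f x) ∈ P.delta ∨ (¬ canRecv P (C' x) m ∧ f x = C' x))) ∧
          (∀ (x a b : T.Vert), a ∈ B → b ∈ B → T.graph.Adj a x → T.graph.Adj b x → a = b) := by
        constructor
        · intro x hx ⟨b, hb, hadj⟩
          have hGadj : G.Adj w (lam x) := hnbr x b hb hadj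
          by_cases hxh : (x : List ℕ).length ≤ h
          · have hfx : f x = C₂ (lam x) := hfmid x hx hxh
            have hCx : C' x = C₁ (lam x) := hcorr x hxh
            rcases hnbrs (lam x) hGadj with hrcv | ⟨hcant, heq⟩
            · left; rw [hfx, hCx]; exact hrcv
            · right
              rw [hfx, hCx]
              exact ⟨hcant, heq⟩
          · have hx' : ¬ (lam x = w ∧ (x : List ℕ).length ≤ h) := fun hc => hxh hc.2
            by_cases hcr : canRecv P (C' x) m
            · left
              have hfx : f x = hcr.choose := by
                simp only [hfdef]
                rw [if_neg hx', if_neg hxh, dif_pos hcr]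
              rw [hfx]
              exact hcr.choose_spec
            · right
              refine ⟨hcr, ?_⟩
              simp only [hfdef]
              rw [if_neg hx', if_neg hxh, dif_neg hcr]
        · intro x a b ha hb hax hbx
          exact unf_uniq hunf x a b (((hmemB a).mp ha).1.trans ((hmemB b).mp hb).1.symm) hax hbx
      have hreach := multi_step T.graph P q1 (Act.brd m) q2 ht C' f B
        (fun b hb => ⟨h1 b hb, hfB b hb⟩) h2 h3 hBfin.toFinset.toList hnd
        (fun x hx => (hlmem x).mp hx)
      rw [hsetl] at hreach
      refine ⟨_, hreach, ?_⟩
      intro u hu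
      have hu' : (u : List ℕ).length ≤ h := le_trans hu (Nat.sub_le h 1)
      by_cases hwu : lam u = w
      · have huB : u ∈ B := (hmemB u).mpr ⟨hwu, hu'⟩
        have ha : appl T.graph f C' B u = f u := by
          simp only [appl]
          rw [if_pos (Or.inl huB)]
        rw [ha, hfB u huB, hwu, hq2]
      · have huB : u ∉ B := fun hc => hwu ((hmemB u).mp hc).1
        by_cases hGadj : G.Adj w (lam u)
        · have hlt : (u : List ℕ).length < n := by omega
          obtain ⟨b, hbl, hblen, hbadj⟩ := unf_exists hunf u w hlt hGadj.symm
          have hbB : b ∈ B := (hmemB b).mpr ⟨hbl, by omega⟩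
          have ha : appl T.graph f C' B u = f u := by
            simp only [appl]
            rw [if_pos (Or.inr ⟨b, hbB, hbadj⟩)]
          rw [ha, hfmid u huB hu']
        · have ha : appl T.graph f C' B u = C' u := by
            simp only [appl]
            rw [if_neg]
            rintro (hc | ⟨b, hbB, hbadj⟩)
            · exact huB hc
            · exact hGadj (hnbr u b hbB hbadj)
          rw [ha, hcorr u hu']
          exact (hfar (lam u) hwu hGadj).symm


/-- h-correct simulation on the unfolding tree, and covering at the root. -/
theorem unfolding_h_correct {Q M V : Type} [Fintype V] (G : SimpleGraph V)
    (P : Protocol Q M) (qf : Q) (v : V) (n : ℕ) (Ls : ℕ → V → Q)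
    (h0 : Ls 0 = initConf P)
    (hstep : ∀ i < n, StepAny G P (Ls i) (Ls (i+1)))
    (hf : Ls n v = qf)
    (T : TreeTopo) (lam : T.Vert → V) (hunf : IsUnfolding G v n T lam) :
    (∀ (h : ℕ) (C₁ C₂ : V → Q) (C' : T.Vert → Q),
      0 < h → h ≤ n → StepAny G P C₁ C₂ →
      (∀ u : T.Vert, (u : List ℕ).length ≤ h → C' u = C₁ (lam u)) →
      ∃ C'₂ : T.Vert → Q, Reach T.graph P C' C'₂ ∧
        ∀ u : T.Vert, (u : List ℕ).length ≤ h - 1 → C'₂ u = C₂ (lam u)) ∧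
    (∃ L' : T.Vert → Q, Reach T.graph P (initConf P) L' ∧ L' T.root = qf) := by
  classical
  refine ⟨fun h C₁ C₂ C' hpos hle hs hc => key_lemma P hunf h C₁ C₂ C' hpos hle hs hc, ?_⟩
  have main : ∀ i, i ≤ n → ∃ C', Reach T.graph P (initConf P) C' ∧
      ∀ u : T.Vert, (u : List ℕ).length ≤ n - i → C' u = Ls i (lam u) := by
    intro i
    induction i with
    | zero =>
        intro _
        exact ⟨initConf P, Relation.ReflTransGen.refl, fun u _ => by rw [h0]; rfl⟩
    | succ i ih =>
        intro hin
        obtain ⟨C', hr, hc⟩ := ih (Nat.le_of_succ_le hin)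
        obtain ⟨C2', hr2, hc2⟩ := key_lemma P hunf (n - i) (Ls i) (Ls (i + 1)) C'
          (by omega) (by omega) (hstep i (by omega)) (fun u hu => hc u hu)
        exact ⟨C2', hr.trans hr2, fun u hu => hc2 u (by omega)⟩
  obtain ⟨C', hr, hc⟩ := main n le_rfl
  refine ⟨C', hr, ?_⟩
  have hroot := hc T.root (by simp [TreeTopo.root])
  rw [hroot, hunf.root_lbl, hf]

end BN
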